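/- Let a, σ̃ > 0 and b > 0, and set σ = σ̃/√(2a). Then the function g(r) = D̃_{b/a}((r − b)/σ) is twice differentiable on ℝ and satisfies the second-order ODE (σ̃²/2)·g''(r) + a(b − r)·g'(r) − b·g(r) = 0 for all r ∈ ℝ. -/

import Mathlib

open Real Filter Finset MeasureTheory

/-- The even power series `u(z) = 1 + ∑_{k=1}^∞ (∏_{j=0}^{k-1}(ν+2j)) z^{2k}/(2k)!`
(the `k = 0` term of the `tsum` equals `1`). -/
noncomputable def evenSeries (ν z : ℝ) : ℝ :=
  ∑' k : ℕ, (∏ j ∈ Finset.range k, (ν + 2 * (j : ℝ))) * z ^ (2 * k) / (Nat.factorial (2 * k))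

/-- The odd power series `v(z) = ∑_{k=0}^∞ (∏_{j=0}^{k-1}(ν+2j+1)) z^{2k+1}/(2k+1)!`
(the `k = 0` term equals `z`). -/
noncomputable def oddSeries (ν z : ℝ) : ℝ :=
  ∑' k : ℕ, (∏ j ∈ Finset.range k, (ν + 2 * (j : ℝ) + 1)) * z ^ (2 * k + 1) /
    (Nat.factorial (2 * k + 1))

/-- The modified parabolic cylinder function
`D̃_ν(y) = 2^{−ν/2} √π [ (1 + ∑_{k≥1} ∏_{j=0}^{k-1}(ν+2j) y^{2k}/(2k)!)/Γ((ν+1)/2)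
  − √2 y (1 + ∑_{k≥1} ∏_{j=0}^{k-1}(ν+2j+1) y^{2k}/(2k+1)!)/Γ(ν/2) ]`,
which equals `e^{y²/4} D_{−ν}(y)` for the parabolic cylinder function `D_{−ν}`.
Note `y * (1 + ∑_{k≥1} ∏_{j=0}^{k-1}(ν+2j+1) y^{2k}/(2k+1)!) = oddSeries ν y`. -/
noncomputable def Dtilde (ν : ℝ) (y : ℝ) : ℝ :=
  (2 : ℝ) ^ (-ν / 2) * Real.sqrt Real.pi *
    (evenSeries ν y / Real.Gamma ((ν + 1) / 2) -
      Real.sqrt 2 * oddSeries ν y / Real.Gamma (ν / 2))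



noncomputable def ES (c : ℕ → ℝ) (z : ℝ) : ℝ :=
  ∑' k : ℕ, c k * z ^ (2 * k) / (Nat.factorial (2 * k))

noncomputable def OS (c : ℕ → ℝ) (z : ℝ) : ℝ :=
  ∑' k : ℕ, c k * z ^ (2 * k + 1) / (Nat.factorial (2 * k + 1))

lemma fact_sq (k : ℕ) : ((Nat.factorial k : ℝ)) * (Nat.factorial k) ≤ (Nat.factorial (2 * k)) := by
  have h : Nat.factorial k * Nat.factorial k ∣ Nat.factorial (2 * k) := by
    simpa [two_mul] using Nat.factorial_mul_factorial_dvd_factorial_add k k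
  exact_mod_cast Nat.le_of_dvd (Nat.factorial_pos _) h

lemma summable_of_bnd {f : ℕ → ℝ} {C y : ℝ}
    (h : ∀ k, |f k| ≤ C * y ^ k / (Nat.factorial k)) : Summable f := by
  refine Summable.of_norm_bounded ?_ (fun k => by simpa [Real.norm_eq_abs] using h k)
  simpa [mul_div_assoc] using (Real.summable_pow_div_factorial y).mul_left C

section bounds

variable {A B : ℝ} {c : ℕ → ℝ}

lemma core_bound (hA : 0 ≤ A) (hB : 0 ≤ B)
    (hc : ∀ k, |c k| ≤ A * B ^ k * (Nat.factorial k : ℝ)) {R : ℝ} (hR : 0 ≤ R) (k : ℕ) :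
    |c k| * R ^ (2 * k) / (Nat.factorial (2 * k) : ℝ) ≤
      A * (B * R ^ 2) ^ k / (Nat.factorial k : ℝ) := by
  rw [div_le_div_iff₀ (by positivity) (by positivity)]
  calc |c k| * R ^ (2 * k) * (Nat.factorial k : ℝ)
      ≤ (A * B ^ k * (Nat.factorial k : ℝ)) * R ^ (2 * k) * (Nat.factorial k : ℝ) := by
        have := hc k
        gcongr ?_ * _ * _
    _ = (A * (B * R ^ 2) ^ k) * ((Nat.factorial k : ℝ) * (Nat.factorial k : ℝ)) := by
        rw [mul_pow, pow_mul]; ring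
    _ ≤ (A * (B * R ^ 2) ^ k) * (Nat.factorial (2 * k) : ℝ) := by
        have := fact_sq k
        gcongr

lemma bound_E (hA : 0 ≤ A) (hB : 0 ≤ B)
    (hc : ∀ k, |c k| ≤ A * B ^ k * (Nat.factorial k : ℝ)) {R z : ℝ} (hR : 0 ≤ R)
    (hz : |z| ≤ R) (k : ℕ) :
    |c k * z ^ (2 * k) / (Nat.factorial (2 * k) : ℝ)| ≤
      A * (B * R ^ 2) ^ k / (Nat.factorial k : ℝ) := by
  have heq : |c k * z ^ (2 * k) / (Nat.factorial (2 * k) : ℝ)|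
      = |c k| * |z| ^ (2 * k) / (Nat.factorial (2 * k) : ℝ) := by
    rw [abs_div, abs_mul, abs_pow, Nat.abs_cast]
  rw [heq]
  refine le_trans ?_ (core_bound hA hB hc hR k)
  gcongr

lemma bound_O' (hA : 0 ≤ A) (hB : 0 ≤ B)
    (hc : ∀ k, |c k| ≤ A * B ^ k * (Nat.factorial k : ℝ)) {R z : ℝ} (hR : 0 ≤ R)
    (hz : |z| ≤ R) (k : ℕ) :
    |c k * z ^ (2 * k + 1) / (Nat.factorial (2 * k) : ℝ)| ≤
      A * R * (B * R ^ 2) ^ k / (Nat.factorial k : ℝ) := by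
  have heq : |c k * z ^ (2 * k + 1) / (Nat.factorial (2 * k) : ℝ)|
      = |c k| * |z| ^ (2 * k + 1) / (Nat.factorial (2 * k) : ℝ) := by
    rw [abs_div, abs_mul, abs_pow, Nat.abs_cast]
  rw [heq]
  calc |c k| * |z| ^ (2 * k + 1) / (Nat.factorial (2 * k) : ℝ)
      ≤ |c k| * R ^ (2 * k + 1) / (Nat.factorial (2 * k) : ℝ) := by
        gcongr
    _ = (|c k| * R ^ (2 * k) / (Nat.factorial (2 * k) : ℝ)) * R := by
        rw [pow_succ]; ring
    _ ≤ (A * (B * R ^ 2) ^ k / (Nat.factorial k : ℝ)) * R := by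
        have := core_bound hA hB hc hR k
        gcongr
    _ = A * R * (B * R ^ 2) ^ k / (Nat.factorial k : ℝ) := by ring

lemma bound_O (hA : 0 ≤ A) (hB : 0 ≤ B)
    (hc : ∀ k, |c k| ≤ A * B ^ k * (Nat.factorial k : ℝ)) {R z : ℝ} (hR : 0 ≤ R)
    (hz : |z| ≤ R) (k : ℕ) :
    |c k * z ^ (2 * k + 1) / (Nat.factorial (2 * k + 1) : ℝ)| ≤
      A * R * (B * R ^ 2) ^ k / (Nat.factorial k : ℝ) := by
  refine le_trans ?_ (bound_O' hA hB hc hR hz k)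
  rw [abs_div, abs_div, Nat.abs_cast, Nat.abs_cast]
  refine div_le_div_of_nonneg_left (abs_nonneg _) (by positivity) ?_
  exact_mod_cast Nat.factorial_le (by omega)

lemma two_k_le_pow (k : ℕ) : (2 * (k : ℝ)) ≤ 2 ^ (k + 1) := by
  have : (k : ℝ) ≤ 2 ^ k := by exact_mod_cast (Nat.lt_two_pow_self (n := k)).le
  rw [pow_succ]
  nlinarith [this]

lemma bound_kE (hA : 0 ≤ A) (hB : 0 ≤ B)
    (hc : ∀ k, |c k| ≤ A * B ^ k * (Nat.factorial k : ℝ)) {R z : ℝ} (hR : 0 ≤ R)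
    (hz : |z| ≤ R) (k : ℕ) :
    |2 * (k : ℝ) * (c k * z ^ (2 * k) / (Nat.factorial (2 * k) : ℝ))| ≤
      2 * A * (2 * B * R ^ 2) ^ k / (Nat.factorial k : ℝ) := by
  rw [abs_mul]
  have h1 : |2 * (k : ℝ)| = 2 * (k : ℝ) := abs_of_nonneg (by positivity)
  rw [h1]
  calc 2 * (k : ℝ) * |c k * z ^ (2 * k) / (Nat.factorial (2 * k) : ℝ)|
      ≤ 2 ^ (k + 1) * (A * (B * R ^ 2) ^ k / (Nat.factorial k : ℝ)) := by
        refine mul_le_mul (two_k_le_pow k) (bound_E hA hB hc hR hz k) (abs_nonneg _) (by positivity)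
    _ = 2 * A * (2 * B * R ^ 2) ^ k / (Nat.factorial k : ℝ) := by
        rw [show (2 * B * R ^ 2) = 2 * (B * R ^ 2) by ring, mul_pow, pow_succ]
        ring

lemma bound_dE (hA : 0 ≤ A) (hB : 0 ≤ B)
    (hc : ∀ k, |c k| ≤ A * B ^ k * (Nat.factorial k : ℝ)) {R z : ℝ} (hR1 : 1 ≤ R)
    (hz : |z| ≤ R) (k : ℕ) :
    |c k * (((2 * k : ℕ) : ℝ) * z ^ (2 * k - 1)) / (Nat.factorial (2 * k) : ℝ)| ≤
      2 * A * (2 * B * R ^ 2) ^ k / (Nat.factorial k : ℝ) := by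
  have hR : 0 ≤ R := le_trans zero_le_one hR1
  have heq : |c k * (((2 * k : ℕ) : ℝ) * z ^ (2 * k - 1)) / (Nat.factorial (2 * k) : ℝ)|
      = 2 * (k : ℝ) * (|c k| * |z| ^ (2 * k - 1) / (Nat.factorial (2 * k) : ℝ)) := by
    rw [abs_div, abs_mul, abs_mul, abs_pow, Nat.abs_cast, Nat.abs_cast]
    push_cast
    ring
  rw [heq]
  have hz' : |z| ^ (2 * k - 1) ≤ R ^ (2 * k) := by
    calc |z| ^ (2 * k - 1) ≤ R ^ (2 * k - 1) := by gcongr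
      _ ≤ R ^ (2 * k) := pow_le_pow_right₀ hR1 (by omega)
  calc 2 * (k : ℝ) * (|c k| * |z| ^ (2 * k - 1) / (Nat.factorial (2 * k) : ℝ))
      ≤ 2 * (k : ℝ) * (|c k| * R ^ (2 * k) / (Nat.factorial (2 * k) : ℝ)) := by gcongr
    _ ≤ 2 * (k : ℝ) * (A * (B * R ^ 2) ^ k / (Nat.factorial k : ℝ)) := by
        have := core_bound hA hB hc hR k
        gcongr
    _ ≤ 2 ^ (k + 1) * (A * (B * R ^ 2) ^ k / (Nat.factorial k : ℝ)) := by
        refine mul_le_mul_of_nonneg_right (two_k_le_pow k) (by positivity)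
    _ = 2 * A * (2 * B * R ^ 2) ^ k / (Nat.factorial k : ℝ) := by
        rw [show (2 * B * R ^ 2) = 2 * (B * R ^ 2) by ring, mul_pow, pow_succ]
        ring

lemma summable_ES (hA : 0 ≤ A) (hB : 0 ≤ B)
    (hc : ∀ k, |c k| ≤ A * B ^ k * (Nat.factorial k : ℝ)) (x : ℝ) :
    Summable (fun k => c k * x ^ (2 * k) / (Nat.factorial (2 * k) : ℝ)) :=
  summable_of_bnd (fun k => bound_E hA hB hc (abs_nonneg x) le_rfl k)

lemma summable_OS (hA : 0 ≤ A) (hB : 0 ≤ B)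
    (hc : ∀ k, |c k| ≤ A * B ^ k * (Nat.factorial k : ℝ)) (x : ℝ) :
    Summable (fun k => c k * x ^ (2 * k + 1) / (Nat.factorial (2 * k + 1) : ℝ)) :=
  summable_of_bnd (fun k => bound_O hA hB hc (abs_nonneg x) le_rfl k)

end bounds

section derivs

variable {A B : ℝ} {c : ℕ → ℝ}

lemma hasDerivAt_OS (hA : 0 ≤ A) (hB : 0 ≤ B)
    (hc : ∀ k, |c k| ≤ A * B ^ k * (Nat.factorial k : ℝ)) (x : ℝ) :
    HasDerivAt (OS c) (ES c x) x := by
  set R : ℝ := |x| + 1 with hRdef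
  have hR1 : 1 ≤ R := by rw [hRdef]; linarith [abs_nonneg x]
  have hR0 : 0 ≤ R := le_trans zero_le_one hR1
  have hxball : x ∈ Metric.ball (0 : ℝ) R := by
    simp only [Metric.mem_ball, Real.dist_eq, sub_zero]
    rw [hRdef]; linarith [abs_nonneg x]
  have hball : ∀ z ∈ Metric.ball (0 : ℝ) R, |z| ≤ R := by
    intro z hz
    simp [Metric.mem_ball, Real.dist_eq] at hz
    linarith
  have husum : Summable (fun k => A * (B * R ^ 2) ^ k / (Nat.factorial k : ℝ)) := by
    simpa [mul_div_assoc] using (Real.summable_pow_div_factorial (B * R ^ 2)).mul_left A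
  have hg : ∀ (k : ℕ), ∀ z ∈ Metric.ball (0 : ℝ) R,
      HasDerivAt (fun z : ℝ => c k * z ^ (2 * k + 1) / (Nat.factorial (2 * k + 1) : ℝ))
        (c k * z ^ (2 * k) / (Nat.factorial (2 * k) : ℝ)) z := by
    intro k z _
    have h := ((hasDerivAt_pow (2 * k + 1) z).const_mul (c k)).div_const
      ((Nat.factorial (2 * k + 1) : ℝ))
    simp only [Nat.add_sub_cancel] at h
    have heq : c k * (((2 * k + 1 : ℕ) : ℝ) * z ^ (2 * k)) / (Nat.factorial (2 * k + 1) : ℝ)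
        = c k * z ^ (2 * k) / (Nat.factorial (2 * k) : ℝ) := by
      rw [Nat.factorial_succ]
      have hne : ((Nat.factorial (2 * k) : ℝ)) ≠ 0 := by positivity
      push_cast
      field_simp
    rw [heq] at h
    exact h
  have hg' : ∀ (k : ℕ), ∀ z ∈ Metric.ball (0 : ℝ) R,
      ‖c k * z ^ (2 * k) / (Nat.factorial (2 * k) : ℝ)‖ ≤
        A * (B * R ^ 2) ^ k / (Nat.factorial k : ℝ) := by
    intro k z hz
    simpa only [Real.norm_eq_abs] using bound_E hA hB hc hR0 (hball z hz) k
  have hg0 : Summable (fun k => c k * x ^ (2 * k + 1) / (Nat.factorial (2 * k + 1) : ℝ)) :=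
    summable_OS hA hB hc x
  exact hasDerivAt_tsum_of_isPreconnected husum Metric.isOpen_ball
    (convex_ball (0 : ℝ) R).isPreconnected hg hg' hxball hg0 hxball

lemma hasDerivAt_ES (hA : 0 ≤ A) (hB : 0 ≤ B)
    (hc : ∀ k, |c k| ≤ A * B ^ k * (Nat.factorial k : ℝ)) (x : ℝ) :
    HasDerivAt (ES c) (OS (fun k => c (k + 1)) x) x := by
  set R : ℝ := |x| + 1 with hRdef
  have hR1 : 1 ≤ R := by rw [hRdef]; linarith [abs_nonneg x]
  have hR0 : 0 ≤ R := le_trans zero_le_one hR1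
  have hxball : x ∈ Metric.ball (0 : ℝ) R := by
    simp only [Metric.mem_ball, Real.dist_eq, sub_zero]
    rw [hRdef]; linarith [abs_nonneg x]
  have hball : ∀ z ∈ Metric.ball (0 : ℝ) R, |z| ≤ R := by
    intro z hz
    simp [Metric.mem_ball, Real.dist_eq] at hz
    linarith
  have husum : Summable (fun k => 2 * A * (2 * B * R ^ 2) ^ k / (Nat.factorial k : ℝ)) := by
    simpa [mul_div_assoc] using (Real.summable_pow_div_factorial (2 * B * R ^ 2)).mul_left (2 * A)
  have hg : ∀ (k : ℕ), ∀ z ∈ Metric.ball (0 : ℝ) R,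
      HasDerivAt (fun z : ℝ => c k * z ^ (2 * k) / (Nat.factorial (2 * k) : ℝ))
        (c k * (((2 * k : ℕ) : ℝ) * z ^ (2 * k - 1)) / (Nat.factorial (2 * k) : ℝ)) z :=
    fun k z _ => ((hasDerivAt_pow (2 * k) z).const_mul (c k)).div_const _
  have hg' : ∀ (k : ℕ), ∀ z ∈ Metric.ball (0 : ℝ) R,
      ‖c k * (((2 * k : ℕ) : ℝ) * z ^ (2 * k - 1)) / (Nat.factorial (2 * k) : ℝ)‖ ≤
        2 * A * (2 * B * R ^ 2) ^ k / (Nat.factorial k : ℝ) := by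
    intro k z hz
    simpa only [Real.norm_eq_abs] using bound_dE hA hB hc hR1 (hball z hz) k
  have hg0 : Summable (fun k => c k * x ^ (2 * k) / (Nat.factorial (2 * k) : ℝ)) :=
    summable_ES hA hB hc x
  have H := hasDerivAt_tsum_of_isPreconnected husum Metric.isOpen_ball
    (convex_ball (0 : ℝ) R).isPreconnected hg hg' hxball hg0 hxball
  have hsum' : Summable
      (fun k => c k * (((2 * k : ℕ) : ℝ) * x ^ (2 * k - 1)) / (Nat.factorial (2 * k) : ℝ)) :=
    summable_of_bnd (fun k => bound_dE hA hB hc hR1 (hball x hxball) k)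
  have hkey : (∑' k : ℕ, c k * (((2 * k : ℕ) : ℝ) * x ^ (2 * k - 1)) /
      (Nat.factorial (2 * k) : ℝ)) = OS (fun k => c (k + 1)) x := by
    rw [Summable.tsum_eq_zero_add hsum']
    have h0 : c 0 * (((2 * 0 : ℕ) : ℝ) * x ^ (2 * 0 - 1)) / (Nat.factorial (2 * 0) : ℝ) = 0 := by
      norm_num
    rw [h0, zero_add, OS]
    refine tsum_congr fun k => ?_
    have e1 : 2 * (k + 1) = 2 * k + 1 + 1 := by ring
    rw [e1, Nat.factorial_succ]
    have hne : ((Nat.factorial (2 * k + 1) : ℝ)) ≠ 0 := by positivity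
    push_cast
    field_simp
  rw [← hkey]
  exact H

end derivs

section recur

variable {A B ν : ℝ} {c : ℕ → ℝ}

lemma ES_recur (hA : 0 ≤ A) (hB : 0 ≤ B)
    (hc : ∀ k, |c k| ≤ A * B ^ k * (Nat.factorial k : ℝ))
    (hrec : ∀ k : ℕ, c (k + 1) = (ν + 2 * (k : ℝ)) * c k) (x : ℝ) :
    ES (fun k => c (k + 1)) x = x * OS (fun k => c (k + 1)) x + ν * ES c x := by
  have hS1 : Summable (fun k : ℕ =>
      2 * (k : ℝ) * (c k * x ^ (2 * k) / (Nat.factorial (2 * k) : ℝ))) :=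
    summable_of_bnd (fun k => bound_kE hA hB hc (abs_nonneg x) le_rfl k)
  have hS2 : Summable (fun k : ℕ =>
      ν * (c k * x ^ (2 * k) / (Nat.factorial (2 * k) : ℝ))) :=
    (summable_ES hA hB hc x).mul_left ν
  have key : ES (fun k => c (k + 1)) x
      = ∑' k : ℕ, (2 * (k : ℝ) * (c k * x ^ (2 * k) / (Nat.factorial (2 * k) : ℝ))
          + ν * (c k * x ^ (2 * k) / (Nat.factorial (2 * k) : ℝ))) := by
    rw [ES]
    refine tsum_congr fun k => ?_
    rw [hrec k]
    ring
  rw [key, Summable.tsum_add hS1 hS2]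
  congr 1
  · rw [Summable.tsum_eq_zero_add hS1]
    have h0 : 2 * ((0 : ℕ) : ℝ) * (c 0 * x ^ (2 * 0) / (Nat.factorial (2 * 0) : ℝ)) = 0 := by
      norm_num
    rw [h0, zero_add, OS, ← tsum_mul_left]
    refine tsum_congr fun k => ?_
    have e1 : 2 * (k + 1) = 2 * k + 1 + 1 := by ring
    rw [e1, Nat.factorial_succ]
    have hne : ((Nat.factorial (2 * k + 1) : ℝ)) ≠ 0 := by positivity
    push_cast
    field_simp
    ring
  · rw [ES, ← tsum_mul_left]

lemma OS_recur (hA : 0 ≤ A) (hB : 0 ≤ B)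
    (hc : ∀ k, |c k| ≤ A * B ^ k * (Nat.factorial k : ℝ))
    (hrec : ∀ k : ℕ, c (k + 1) = (ν + 2 * (k : ℝ) + 1) * c k) (x : ℝ) :
    OS (fun k => c (k + 1)) x = x * ES c x + ν * OS c x := by
  have hT1 : Summable (fun k : ℕ =>
      c k * x ^ (2 * k + 1) / (Nat.factorial (2 * k) : ℝ)) :=
    summable_of_bnd (fun k => bound_O' hA hB hc (abs_nonneg x) le_rfl k)
  have hT2 : Summable (fun k : ℕ =>
      ν * (c k * x ^ (2 * k + 1) / (Nat.factorial (2 * k + 1) : ℝ))) :=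
    (summable_OS hA hB hc x).mul_left ν
  have key : OS (fun k => c (k + 1)) x
      = ∑' k : ℕ, (c k * x ^ (2 * k + 1) / (Nat.factorial (2 * k) : ℝ)
          + ν * (c k * x ^ (2 * k + 1) / (Nat.factorial (2 * k + 1) : ℝ))) := by
    rw [OS]
    refine tsum_congr fun k => ?_
    rw [hrec k, Nat.factorial_succ]
    have hne : ((Nat.factorial (2 * k) : ℝ)) ≠ 0 := by positivity
    push_cast
    field_simp
    ring
  rw [key, Summable.tsum_add hT1 hT2]
  congr 1
  · rw [ES, ← tsum_mul_left]
    refine tsum_congr fun k => ?_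
    rw [pow_succ]
    ring
  · rw [OS, ← tsum_mul_left]

end recur

noncomputable def eC (ν : ℝ) (k : ℕ) : ℝ := ∏ j ∈ Finset.range k, (ν + 2 * (j : ℝ))
noncomputable def oC (ν : ℝ) (k : ℕ) : ℝ := ∏ j ∈ Finset.range k, (ν + 2 * (j : ℝ) + 1)

lemma evenSeries_eq (ν : ℝ) : evenSeries ν = ES (eC ν) := rfl
lemma oddSeries_eq (ν : ℝ) : oddSeries ν = OS (oC ν) := rfl

lemma eC_rec (ν : ℝ) (k : ℕ) : eC ν (k + 1) = (ν + 2 * (k : ℝ)) * eC ν k := by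
  rw [eC, Finset.prod_range_succ, mul_comm]
  rfl

lemma oC_rec (ν : ℝ) (k : ℕ) : oC ν (k + 1) = (ν + 2 * (k : ℝ) + 1) * oC ν k := by
  rw [oC, Finset.prod_range_succ, mul_comm]
  rfl

lemma eC_bound (ν : ℝ) (k : ℕ) :
    |eC ν k| ≤ 1 * (|ν| + 3) ^ k * (Nat.factorial k : ℝ) := by
  induction k with
  | zero => simp [eC]
  | succ n ih =>
    rw [eC_rec]
    have h2 : |ν + 2 * (n : ℝ)| ≤ (|ν| + 3) * (n + 1) := by
      have := abs_add_le ν (2 * (n : ℝ))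
      have h3 : |2 * (n : ℝ)| = 2 * n := by
        rw [abs_mul, Nat.abs_cast]; norm_num
      have h4 : (0 : ℝ) ≤ |ν| := abs_nonneg ν
      have h5 : (0 : ℝ) ≤ (n : ℝ) := Nat.cast_nonneg n
      nlinarith
    calc |(ν + 2 * (n : ℝ)) * eC ν n| = |ν + 2 * (n : ℝ)| * |eC ν n| := abs_mul _ _
      _ ≤ ((|ν| + 3) * (n + 1)) * (1 * (|ν| + 3) ^ n * (Nat.factorial n : ℝ)) := by
          refine mul_le_mul h2 ih (abs_nonneg _) (by positivity)
      _ = 1 * (|ν| + 3) ^ (n + 1) * (Nat.factorial (n + 1) : ℝ) := by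
          rw [Nat.factorial_succ, pow_succ]
          push_cast
          ring

lemma oC_bound (ν : ℝ) (k : ℕ) :
    |oC ν k| ≤ 1 * (|ν| + 3) ^ k * (Nat.factorial k : ℝ) := by
  induction k with
  | zero => simp [oC]
  | succ n ih =>
    rw [oC_rec]
    have h2 : |ν + 2 * (n : ℝ) + 1| ≤ (|ν| + 3) * (n + 1) := by
      have := abs_add_le (ν + 2 * (n : ℝ)) 1
      have := abs_add_le ν (2 * (n : ℝ))
      have h3 : |2 * (n : ℝ)| = 2 * n := by
        rw [abs_mul, Nat.abs_cast]; norm_num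
      have h4 : (0 : ℝ) ≤ |ν| := abs_nonneg ν
      have h5 : (0 : ℝ) ≤ (n : ℝ) := Nat.cast_nonneg n
      simp only [abs_one] at *
      nlinarith
    calc |(ν + 2 * (n : ℝ) + 1) * oC ν n| = |ν + 2 * (n : ℝ) + 1| * |oC ν n| := abs_mul _ _
      _ ≤ ((|ν| + 3) * (n + 1)) * (1 * (|ν| + 3) ^ n * (Nat.factorial n : ℝ)) := by
          refine mul_le_mul h2 ih (abs_nonneg _) (by positivity)
      _ = 1 * (|ν| + 3) ^ (n + 1) * (Nat.factorial (n + 1) : ℝ) := by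
          rw [Nat.factorial_succ, pow_succ]
          push_cast
          ring

lemma maj_shift {A B : ℝ} {c : ℕ → ℝ} (hA : 0 ≤ A) (hB : 0 ≤ B)
    (hc : ∀ k, |c k| ≤ A * B ^ k * (Nat.factorial k : ℝ)) (k : ℕ) :
    |c (k + 1)| ≤ (A * B) * (2 * B) ^ k * (Nat.factorial k : ℝ) := by
  calc |c (k + 1)| ≤ A * B ^ (k + 1) * (Nat.factorial (k + 1) : ℝ) := hc (k + 1)
    _ = (A * B) * B ^ k * (((k : ℝ) + 1) * (Nat.factorial k : ℝ)) := by
        rw [Nat.factorial_succ, pow_succ]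
        push_cast
        ring
    _ ≤ (A * B) * B ^ k * ((2 : ℝ) ^ k * (Nat.factorial k : ℝ)) := by
        have h : ((k : ℝ) + 1) ≤ 2 ^ k := by exact_mod_cast Nat.lt_two_pow_self (n := k)
        gcongr
    _ = (A * B) * (2 * B) ^ k * (Nat.factorial k : ℝ) := by
        rw [mul_pow]
        ring

/-- `D̃_ν` is twice differentiable and satisfies `D'' = y D' + ν D`. -/
lemma Dtilde_ode (ν : ℝ) : ∃ D1 D2 : ℝ → ℝ,
    (∀ y, HasDerivAt (Dtilde ν) (D1 y) y) ∧ (∀ y, HasDerivAt D1 (D2 y) y) ∧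
    (∀ y, D2 y = y * D1 y + ν * Dtilde ν y) := by
  set B : ℝ := |ν| + 3 with hBdef
  have hB : (0 : ℝ) ≤ B := by rw [hBdef]; positivity
  have hA : (0 : ℝ) ≤ 1 := zero_le_one
  have hce : ∀ k, |eC ν k| ≤ 1 * B ^ k * (Nat.factorial k : ℝ) := eC_bound ν
  have hco : ∀ k, |oC ν k| ≤ 1 * B ^ k * (Nat.factorial k : ℝ) := oC_bound ν
  have hce' : ∀ k, |eC ν (k + 1)| ≤ (1 * B) * (2 * B) ^ k * (Nat.factorial k : ℝ) :=
    maj_shift hA hB hce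
  have hco' : ∀ k, |oC ν (k + 1)| ≤ (1 * B) * (2 * B) ^ k * (Nat.factorial k : ℝ) :=
    maj_shift hA hB hco
  have hAB : (0 : ℝ) ≤ 1 * B := by positivity
  have h2B : (0 : ℝ) ≤ 2 * B := by positivity
  set K1 : ℝ := (2 : ℝ) ^ (-ν / 2) * Real.sqrt Real.pi / Real.Gamma ((ν + 1) / 2) with hK1
  set K2 : ℝ := (2 : ℝ) ^ (-ν / 2) * Real.sqrt Real.pi * Real.sqrt 2 / Real.Gamma (ν / 2) with hK2
  have hD : Dtilde ν = fun y => K1 * ES (eC ν) y - K2 * OS (oC ν) y := by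
    funext y
    rw [Dtilde, evenSeries_eq, oddSeries_eq, hK1, hK2]
    ring
  refine ⟨fun y => K1 * OS (fun k => eC ν (k + 1)) y - K2 * ES (oC ν) y,
    fun y => K1 * ES (fun k => eC ν (k + 1)) y - K2 * OS (fun k => oC ν (k + 1)) y, ?_, ?_, ?_⟩
  · intro y
    rw [hD]
    exact ((hasDerivAt_ES hA hB hce y).const_mul K1).sub
      ((hasDerivAt_OS hA hB hco y).const_mul K2)
  · intro y
    exact ((hasDerivAt_OS hAB h2B hce' y).const_mul K1).sub
      ((hasDerivAt_ES hA hB hco y).const_mul K2)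
  · intro y
    show K1 * ES (fun k => eC ν (k + 1)) y - K2 * OS (fun k => oC ν (k + 1)) y
      = y * (K1 * OS (fun k => eC ν (k + 1)) y - K2 * ES (oC ν) y) + ν * Dtilde ν y
    rw [ES_recur hA hB hce (eC_rec ν) y, OS_recur hA hB hco (oC_rec ν) y, hD]
    ring


/-- Let `a, σ̃ > 0` and `b > 0`, and set `σ = σ̃/√(2a)`. Then
`g(r) = D̃_{b/a}((r − b)/σ)` is twice differentiable on `ℝ` and satisfies
`(σ̃²/2) g''(r) + a (b − r) g'(r) − b g(r) = 0` for all `r ∈ ℝ`. -/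
theorem Dtilde_comp_increasing_solves_OU_ODE (a σt b : ℝ)
    (ha : 0 < a) (hσ : 0 < σt) (hb : 0 < b) :
    ∃ g' g'' : ℝ → ℝ,
      (∀ r : ℝ,
        HasDerivAt (fun r : ℝ => Dtilde (b / a) ((r - b) / (σt / Real.sqrt (2 * a))))
          (g' r) r) ∧
      (∀ r : ℝ, HasDerivAt g' (g'' r) r) ∧
      (∀ r : ℝ,
        σt ^ 2 / 2 * g'' r + a * (b - r) * g' r -
          b * Dtilde (b / a) ((r - b) / (σt / Real.sqrt (2 * a))) = 0) := by
  obtain ⟨D1, D2, hD1, hD2, hode⟩ := Dtilde_ode (b / a)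
  set σ : ℝ := σt / Real.sqrt (2 * a) with hσdef
  have hσpos : 0 < σ := by
    rw [hσdef]
    exact div_pos hσ (Real.sqrt_pos.2 (by positivity))
  have hσne : σ ≠ 0 := ne_of_gt hσpos
  have hane : a ≠ 0 := ne_of_gt ha
  have hσ2 : σ ^ 2 = σt ^ 2 / (2 * a) := by
    rw [hσdef, div_pow, Real.sq_sqrt (by positivity : (0:ℝ) ≤ 2 * a)]
  have hst2 : σt ^ 2 = 2 * a * σ ^ 2 := by
    rw [hσ2]
    field_simp
  have hinner : ∀ r : ℝ, HasDerivAt (fun r : ℝ => (r - b) / σ) (1 / σ) r := by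
    intro r
    exact ((hasDerivAt_id r).sub_const b).div_const σ
  refine ⟨fun r => D1 ((r - b) / σ) * (1 / σ),
    fun r => D2 ((r - b) / σ) * (1 / σ) * (1 / σ), ?_, ?_, ?_⟩
  · intro r
    have := (hD1 ((r - b) / σ)).comp r (hinner r); exact this
  · intro r
    exact ((hD2 ((r - b) / σ)).comp r (hinner r)).mul_const (1 / σ)
  · intro r
    show σt ^ 2 / 2 * (D2 ((r - b) / σ) * (1 / σ) * (1 / σ))
        + a * (b - r) * (D1 ((r - b) / σ) * (1 / σ))
        - b * Dtilde (b / a) ((r - b) / σ) = 0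
    rw [hode ((r - b) / σ)]
    rw [hst2]
    field_simp
    ring
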